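/- Properties of the accelerated parameter sequence. Let τ_0 ∈ (0,1] and define recursively τ_k := (τ_{k−1}/2)·(√(τ_{k−1}² + 4) − τ_{k−1}) for k ≥ 1. Then: (i) τ_k ∈ (0,1) for all k ≥ 1 and 1 − τ_k = τ_k²/τ_{k−1}² for all k ≥ 1, so the sequence (τ_k) is strictly decreasing; (ii) τ_0/(τ_0·k + 1) ≤ τ_k ≤ 2τ_0/(τ_0·k + 2) for every k ≥ 0; (iii) ∏_{i=1}^k (1 − τ_i) = τ_k²/τ_0² ≤ 4/(τ_0·k + 2)² for every k ≥ 0 (with the empty product equal to 1 for k = 0). -/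

import Mathlib

/-- Properties of the accelerated parameter sequence
`τ_k = (τ_{k−1}/2)·(√(τ_{k−1}² + 4) − τ_{k−1})`. -/
theorem accelerated_param_sequence_properties (τ : ℕ → ℝ)
    (hτ0_pos : 0 < τ 0) (hτ0_le : τ 0 ≤ 1)
    (hτrec : ∀ k, τ (k + 1) = τ k / 2 * (Real.sqrt (τ k ^ 2 + 4) - τ k)) :
    (∀ k ≥ 1, 0 < τ k ∧ τ k < 1)
    ∧ (∀ k, 1 - τ (k + 1) = τ (k + 1) ^ 2 / τ k ^ 2)
    ∧ StrictAnti τ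
    ∧ (∀ k : ℕ, τ 0 / (τ 0 * k + 1) ≤ τ k ∧ τ k ≤ 2 * τ 0 / (τ 0 * k + 2))
    ∧ (∀ k : ℕ, ∏ i ∈ Finset.Icc 1 k, (1 - τ i) = τ k ^ 2 / τ 0 ^ 2
        ∧ τ k ^ 2 / τ 0 ^ 2 ≤ 4 / (τ 0 * k + 2) ^ 2) := by
  -- positivity of every term
  have hpos : ∀ k, 0 < τ k := by
    intro k
    induction k with
    | zero => exact hτ0_pos
    | succ k ih =>
      rw [hτrec]
      have hs := Real.sq_sqrt (show (0:ℝ) ≤ τ k ^ 2 + 4 by positivity)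
      have hn := Real.sqrt_nonneg (τ k ^ 2 + 4)
      have : τ k < Real.sqrt (τ k ^ 2 + 4) := by nlinarith
      nlinarith
  -- key identity: τ_{k+1}² = τ_k² (1 - τ_{k+1})
  have hkey : ∀ k, τ (k + 1) ^ 2 = τ k ^ 2 * (1 - τ (k + 1)) := by
    intro k
    have hs := Real.sq_sqrt (show (0:ℝ) ≤ τ k ^ 2 + 4 by positivity)
    rw [hτrec]
    linear_combination (τ k ^ 2 / 4) * hs
  have hlt1 : ∀ k, τ (k + 1) < 1 := by
    intro k
    nlinarith [hkey k, hpos k, hpos (k + 1), sq_nonneg (τ (k + 1))]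
  have hdec : ∀ k, τ (k + 1) < τ k := by
    intro k
    nlinarith [hkey k, hpos k, hpos (k + 1),
      mul_pos (mul_pos (hpos k) (hpos k)) (hpos (k + 1))]
  -- reciprocal step bounds
  have hstep : ∀ k, 1 / τ k + 1 / 2 ≤ 1 / τ (k + 1) ∧ 1 / τ (k + 1) ≤ 1 / τ k + 1 := by
    intro k
    have ha := hpos k
    have hb := hpos (k + 1)
    have hk := hkey k
    have hd := hdec k
    constructor
    · have heq : 1 / τ k + 1 / 2 = (2 + τ k) / (2 * τ k) := by field_simp
      rw [heq, div_le_div_iff₀ (by positivity) hb]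
      -- (2 + a) * b ≤ 2 * a,  i.e.  a*b ≤ 2*(a-b)
      nlinarith [mul_pos ha hb, mul_pos (mul_pos ha hb) (sub_pos.mpr hd),
        mul_pos hb (sub_pos.mpr hd)]
    · have heq : 1 / τ k + 1 = (1 + τ k) / τ k := by field_simp
      rw [heq, div_le_div_iff₀ hb ha]
      -- a ≤ (1 + a) * b,  i.e.  a - b ≤ a*b
      nlinarith [mul_pos ha hb, mul_pos (mul_pos ha hb) hb, mul_pos hb hb]
  -- reciprocal bounds
  have hinv : ∀ k : ℕ, 1 / τ 0 + (k : ℝ) / 2 ≤ 1 / τ k ∧ 1 / τ k ≤ 1 / τ 0 + (k : ℝ) := by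
    intro k
    induction k with
    | zero => simp
    | succ k ih =>
      obtain ⟨h1, h2⟩ := ih
      obtain ⟨h3, h4⟩ := hstep k
      push_cast
      constructor <;> linarith
  -- bounds in original form
  have hbounds : ∀ k : ℕ, τ 0 / (τ 0 * k + 1) ≤ τ k ∧ τ k ≤ 2 * τ 0 / (τ 0 * k + 2) := by
    intro k
    have ha := hpos k
    obtain ⟨h1, h2⟩ := hinv k
    have hden1 : (0:ℝ) < τ 0 * k + 1 := by positivity
    have hden2 : (0:ℝ) < τ 0 * k + 2 := by positivity
    constructor
    · rw [div_le_iff₀ hden1]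
      have h2' := mul_le_mul_of_nonneg_right h2 (le_of_lt (mul_pos ha hτ0_pos))
      have e1 : 1 / τ k * (τ k * τ 0) = τ 0 := by field_simp
      have e2 : (1 / τ 0 + (k : ℝ)) * (τ k * τ 0) = τ k * (τ 0 * k + 1) := by
        field_simp; ring
      rw [e1, e2] at h2'
      exact h2'
    · rw [le_div_iff₀ hden2]
      have h1' := mul_le_mul_of_nonneg_right h1 (le_of_lt (mul_pos ha hτ0_pos))
      have e1 : 1 / τ k * (τ k * τ 0) = τ 0 := by field_simp
      have e2 : (1 / τ 0 + (k : ℝ) / 2) * (τ k * τ 0) = τ k * (τ 0 * k + 2) / 2 := by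
        field_simp; ring
      rw [e1, e2] at h1'
      linarith
  have hτ0ne : τ 0 ≠ 0 := ne_of_gt hτ0_pos
  refine ⟨?_, ?_, ?_, hbounds, ?_⟩
  · rintro k hk
    obtain ⟨j, rfl⟩ := Nat.exists_eq_add_of_le hk
    refine ⟨hpos _, ?_⟩
    have := hlt1 j
    rwa [show 1 + j = j + 1 from Nat.add_comm 1 j]
  · intro k
    have hk := hkey k
    have hane : τ k ≠ 0 := ne_of_gt (hpos k)
    field_simp
    linear_combination -hk
  · exact strictAnti_nat_of_succ_lt hdec
  · intro k
    have hprod : ∏ i ∈ Finset.Icc 1 k, (1 - τ i) = τ k ^ 2 / τ 0 ^ 2 := by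
      induction k with
      | zero =>
        simp [div_self (pow_ne_zero 2 hτ0ne)]
      | succ k ih =>
        rw [Finset.prod_Icc_succ_top (Nat.one_le_iff_ne_zero.mpr (Nat.succ_ne_zero k)), ih]
        have hane : τ k ≠ 0 := ne_of_gt (hpos k)
        have hk := hkey k
        field_simp
        linear_combination -hk
    refine ⟨hprod, ?_⟩
    obtain ⟨_, h2⟩ := hbounds k
    have hden2 : (0:ℝ) < τ 0 * k + 2 := by positivity
    rw [div_le_div_iff₀ (by positivity) (by positivity)]
    have h2' : τ k * (τ 0 * k + 2) ≤ 2 * τ 0 := by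
      rw [le_div_iff₀ hden2] at h2
      linarith
    nlinarith [hpos k, mul_pos (hpos k) hden2]
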